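/- Let n ≥ 2, d, p, C, l, u be natural numbers with l + u = n and u ≥ 1. Let X be a d×n real matrix each of whose columns has Euclidean norm at most 1. Let Y_n and Y_p be n×C real matrices such that every row of Y_n and every row of Y_p is a standard basis vector of ℝ^C, and the first l rows of Y_p coincide with the corresponding rows of Y_n. Let m be the number of indices i with l < i ≤ n such that the i-th row of Y_p differs from the i-th row of Y_n, and set P_e = m/u. Let H_n = I - (1/n)·J be the centering matrix and f_X(V,Y) = (1/(n-1)²)·tr(Vᵀ X H_n Y Yᵀ H_n Xᵀ V). Suppose V* and V† are d×p real matrices with V*ᵀV* = I and V†ᵀV† = I such that V* maximizes f_X(V, Y_n) and V† maximizes f_X(V, Y_p) over all d×p matrices V with VᵀV = I. Then sqrt(f_X(V*, Y_n)) − sqrt(f_X(V†, Y_n)) ≤ (2(2+√2)·u/(n-1))·P_e. -/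

import Mathlib

open Matrix

/-- The `n × n` centering matrix `H_n = I - (1/n)·J`, where `J` is the all-ones matrix. -/
noncomputable def centering (n : ℕ) : Matrix (Fin n) (Fin n) ℝ :=
  1 - ((n : ℝ))⁻¹ • Matrix.of (fun _ _ => (1 : ℝ))

/-- The HSIC objective `f_X(V,Y) = (1/(n-1)²)·tr(Vᵀ X H_n Y Yᵀ H_n Xᵀ V)`. -/
noncomputable def fObj {n d p C : ℕ} (X : Matrix (Fin d) (Fin n) ℝ)
    (V : Matrix (Fin d) (Fin p) ℝ) (Y : Matrix (Fin n) (Fin C) ℝ) : ℝ :=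
  (1 / ((n : ℝ) - 1) ^ 2) *
    Matrix.trace (Vᵀ * X * centering n * Y * Yᵀ * centering n * Xᵀ * V)

/-! ### Auxiliary Euclidean-norm machinery -/

noncomputable def en {ι : Type*} [Fintype ι] (v : ι → ℝ) : ℝ :=
  ‖((WithLp.equiv 2 (ι → ℝ)).symm v : EuclideanSpace ℝ ι)‖

lemma en_eq {ι : Type*} [Fintype ι] (v : ι → ℝ) :
    en v = Real.sqrt (∑ i, v i ^ 2) := by
  rw [en, EuclideanSpace.norm_eq]
  simp [Real.norm_eq_abs, sq_abs]

lemma en_nonneg {ι : Type*} [Fintype ι] (v : ι → ℝ) : 0 ≤ en v := norm_nonneg _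

lemma en_add_le {ι : Type*} [Fintype ι] (v w : ι → ℝ) : en (v + w) ≤ en v + en w :=
  norm_add_le ((WithLp.equiv 2 (ι → ℝ)).symm v) ((WithLp.equiv 2 (ι → ℝ)).symm w)

lemma en_smul {ι : Type*} [Fintype ι] (c : ℝ) (v : ι → ℝ) : en (c • v) = |c| * en v := by
  have h : ((WithLp.equiv 2 (ι → ℝ)).symm (c • v) : EuclideanSpace ℝ ι)
      = c • ((WithLp.equiv 2 (ι → ℝ)).symm v) := rfl
  rw [en, h, norm_smul, Real.norm_eq_abs]; rfl

lemma en_sum_le {ι α : Type*} [Fintype ι] (s : Finset α) (f : α → ι → ℝ) :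
    en (∑ i ∈ s, f i) ≤ ∑ i ∈ s, en (f i) := by
  have h : ((WithLp.equiv 2 (ι → ℝ)).symm (∑ i ∈ s, f i) : EuclideanSpace ℝ ι)
      = ∑ i ∈ s, ((WithLp.equiv 2 (ι → ℝ)).symm (f i) : EuclideanSpace ℝ ι) := WithLp.toLp_sum 2 (ι → ℝ) s f
  rw [en, h]; exact norm_sum_le _ _

noncomputable def mnorm {a b : ℕ} (A : Matrix (Fin a) (Fin b) ℝ) : ℝ :=
  en (fun q : Fin a × Fin b => A q.1 q.2)

lemma mnorm_eq {a b : ℕ} (A : Matrix (Fin a) (Fin b) ℝ) :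
    mnorm A = Real.sqrt (∑ i, ∑ j, A i j ^ 2) := by
  rw [mnorm, en_eq, Fintype.sum_prod_type]

lemma mnorm_nonneg {a b : ℕ} (A : Matrix (Fin a) (Fin b) ℝ) : 0 ≤ mnorm A := norm_nonneg _

lemma mnorm_add_le {a b : ℕ} (A B : Matrix (Fin a) (Fin b) ℝ) :
    mnorm (A + B) ≤ mnorm A + mnorm B := by
  have h : (fun q : Fin a × Fin b => (A + B) q.1 q.2)
      = (fun q : Fin a × Fin b => A q.1 q.2) + (fun q : Fin a × Fin b => B q.1 q.2) := rfl
  rw [mnorm, h]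
  exact en_add_le _ _

lemma centering_transpose (n : ℕ) : (centering n)ᵀ = centering n := by
  unfold centering
  ext i j
  simp [Matrix.transpose_apply, Matrix.one_apply, eq_comm]

lemma fObj_eq {n d p C : ℕ} (X : Matrix (Fin d) (Fin n) ℝ)
    (V : Matrix (Fin d) (Fin p) ℝ) (Y : Matrix (Fin n) (Fin C) ℝ) :
    fObj X V Y = (mnorm (Yᵀ * centering n * Xᵀ * V) / ((n : ℝ) - 1)) ^ 2 := by
  have hA : Vᵀ * X * centering n * Y * Yᵀ * centering n * Xᵀ * V
      = (Yᵀ * centering n * Xᵀ * V)ᵀ * (Yᵀ * centering n * Xᵀ * V) := by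
    simp [Matrix.transpose_mul, centering_transpose, Matrix.mul_assoc]
  have htr : Matrix.trace ((Yᵀ * centering n * Xᵀ * V)ᵀ * (Yᵀ * centering n * Xᵀ * V))
      = ∑ i, ∑ j, (Yᵀ * centering n * Xᵀ * V) i j ^ 2 := by
    rw [Matrix.trace]
    simp only [Matrix.diag_apply, Matrix.mul_apply, Matrix.transpose_apply]
    rw [Finset.sum_comm]
    simp [sq]
  have hs : ∑ i, ∑ j, (Yᵀ * centering n * Xᵀ * V) i j ^ 2
      = mnorm (Yᵀ * centering n * Xᵀ * V) ^ 2 := by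
    rw [mnorm_eq, Real.sq_sqrt]
    positivity
  rw [fObj, hA, htr, hs, div_pow]
  ring

lemma sqrt_fObj {n d p C : ℕ} (hn : 2 ≤ n) (X : Matrix (Fin d) (Fin n) ℝ)
    (V : Matrix (Fin d) (Fin p) ℝ) (Y : Matrix (Fin n) (Fin C) ℝ) :
    Real.sqrt (fObj X V Y) = mnorm (Yᵀ * centering n * Xᵀ * V) / ((n : ℝ) - 1) := by
  have hpos : (0 : ℝ) < (n : ℝ) - 1 := by
    have : (2 : ℝ) ≤ (n : ℝ) := by exact_mod_cast hn
    linarith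
  rw [fObj_eq, Real.sqrt_sq (div_nonneg (mnorm_nonneg _) hpos.le)]

lemma proj_bound {d p : ℕ} (V : Matrix (Fin d) (Fin p) ℝ) (hV : Vᵀ * V = 1)
    (w : Fin d → ℝ) :
    en (fun q => ∑ k, w k * V k q) ≤ en w := by
  have hz : (fun q => ∑ k, w k * V k q) = Vᵀ *ᵥ w := by
    funext q
    simp [Matrix.mulVec, dotProduct, mul_comm]
  set z := Vᵀ *ᵥ w with hzdef
  have h1 : w ⬝ᵥ (V *ᵥ z) = z ⬝ᵥ z := by
    rw [Matrix.dotProduct_mulVec, ← Matrix.mulVec_transpose]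
  have h2 : (V *ᵥ z) ⬝ᵥ (V *ᵥ z) = z ⬝ᵥ z := by
    rw [Matrix.dotProduct_mulVec, ← Matrix.mulVec_transpose, Matrix.mulVec_mulVec, hV,
      Matrix.one_mulVec]
  have h3 : 0 ≤ (w - V *ᵥ z) ⬝ᵥ (w - V *ᵥ z) := Finset.sum_nonneg fun i _ => mul_self_nonneg _
  have h4 : z ⬝ᵥ z ≤ w ⬝ᵥ w := by
    have e : (w - V *ᵥ z) ⬝ᵥ (w - V *ᵥ z)
        = w ⬝ᵥ w - 2 * (w ⬝ᵥ (V *ᵥ z)) + (V *ᵥ z) ⬝ᵥ (V *ᵥ z) := by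
      simp only [sub_dotProduct, dotProduct_sub]
      rw [dotProduct_comm (V *ᵥ z) w]
      ring
    rw [e, h1, h2] at h3
    linarith
  rw [hz, en_eq, en_eq]
  apply Real.sqrt_le_sqrt
  simpa [dotProduct, sq] using h4

lemma col_bound {n d : ℕ} (hn : 2 ≤ n) (X : Matrix (Fin d) (Fin n) ℝ)
    (hX : ∀ j : Fin n, Real.sqrt (∑ i : Fin d, X i j ^ 2) ≤ 1) (i : Fin n) :
    en (fun k => (centering n * Xᵀ) i k) ≤ 2 := by
  have hn0 : (n : ℝ) ≠ 0 := by positivity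
  have hw : (fun k => (centering n * Xᵀ) i k)
      = (fun k => X k i) + (-(n : ℝ)⁻¹) • (fun k => ∑ j, X k j) := by
    funext k
    simp only [Matrix.mul_apply, centering, Matrix.sub_apply, Matrix.one_apply,
      Matrix.smul_apply, Matrix.of_apply, Matrix.transpose_apply, Pi.add_apply,
      Pi.smul_apply, smul_eq_mul]
    simp only [sub_mul, Finset.sum_sub_distrib, ite_mul, one_mul, zero_mul,
      Finset.sum_ite_eq, Finset.mem_univ, if_true, Finset.mul_sum, neg_mul,
      Finset.sum_neg_distrib]
    ring_nf
  rw [hw]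
  have h1 : en (fun k => X k i) ≤ 1 := by
    rw [en_eq]; exact hX i
  have h2 : en (fun k => ∑ j, X k j) ≤ n := by
    have he : (fun k => ∑ j, X k j) = ∑ j : Fin n, (fun k => X k j) := by
      funext k; simp
    rw [he]
    calc en (∑ j : Fin n, fun k => X k j) ≤ ∑ j : Fin n, en (fun k => X k j) :=
          en_sum_le _ _
      _ ≤ ∑ _j : Fin n, (1 : ℝ) := Finset.sum_le_sum fun j _ => by rw [en_eq]; exact hX j
      _ = n := by simp
  calc en ((fun k => X k i) + (-(n : ℝ)⁻¹) • fun k => ∑ j, X k j)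
      ≤ en (fun k => X k i) + en ((-(n : ℝ)⁻¹) • fun k => ∑ j, X k j) := en_add_le _ _
    _ = en (fun k => X k i) + (n : ℝ)⁻¹ * en (fun k => ∑ j, X k j) := by
        rw [en_smul, abs_neg, abs_inv, Nat.abs_cast]
    _ ≤ 1 + (n : ℝ)⁻¹ * n := by
        have : (0:ℝ) ≤ (n : ℝ)⁻¹ := by positivity
        gcongr
    _ = 2 := by rw [inv_mul_cancel₀ hn0]; norm_num

lemma row_diff_bound {C : ℕ} (a b : Fin C) :
    ∑ c, ((Pi.single a 1 : Fin C → ℝ) c - (Pi.single b 1 : Fin C → ℝ) c) ^ 2 ≤ 2 := by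
  by_cases hab : a = b
  · subst hab; simp
  · have he : ∀ c : Fin C,
        ((Pi.single a 1 : Fin C → ℝ) c - (Pi.single b 1 : Fin C → ℝ) c) ^ 2
          = (if c = a then (1:ℝ) else 0) + (if c = b then (1:ℝ) else 0) := by
      intro c
      rcases eq_or_ne c a with rfl | hca
      · rcases eq_or_ne c b with rfl | hcb
        · exact absurd rfl hab
        · simp [Pi.single_apply, hcb]
      · rcases eq_or_ne c b with rfl | hcb
        · simp [Pi.single_apply, Ne.symm hab, hca]
        · simp [Pi.single_apply, hca, hcb]
    rw [Finset.sum_congr rfl fun c _ => he c, Finset.sum_add_distrib]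
    simp
    norm_num

open Classical in
/-- Key perturbation bound. -/
lemma key_bound {n d p C l : ℕ} (hn : 2 ≤ n)
    (X : Matrix (Fin d) (Fin n) ℝ)
    (hX : ∀ j : Fin n, Real.sqrt (∑ i : Fin d, X i j ^ 2) ≤ 1)
    (Yn Yp : Matrix (Fin n) (Fin C) ℝ)
    (hYn : ∀ i : Fin n, ∃ c : Fin C, Yn i = Pi.single c 1)
    (hYp : ∀ i : Fin n, ∃ c : Fin C, Yp i = Pi.single c 1)
    (hagree : ∀ i : Fin n, (i : ℕ) < l → Yp i = Yn i)
    (V : Matrix (Fin d) (Fin p) ℝ) (hV : Vᵀ * V = 1) :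
    mnorm ((Yn - Yp)ᵀ * centering n * Xᵀ * V)
      ≤ 2 * Real.sqrt 2 *
        ((Finset.univ.filter fun i : Fin n => l ≤ (i : ℕ) ∧ Yp i ≠ Yn i).card : ℝ) := by
  classical
  set S := Finset.univ.filter fun i : Fin n => l ≤ (i : ℕ) ∧ Yp i ≠ Yn i with hS
  set D := Yn - Yp with hD
  set B := centering n * Xᵀ * V with hB
  -- rows of D vanish off S
  have hDzero : ∀ i : Fin n, i ∉ S → ∀ c, D i c = 0 := by
    intro i hi c
    have hYpi : Yp i = Yn i := by
      by_cases hl : l ≤ (i : ℕ)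
      · by_contra hne
        exact hi (Finset.mem_filter.mpr ⟨Finset.mem_univ _, hl, hne⟩)
      · exact hagree i (not_le.mp hl)
    simp [hD, Matrix.sub_apply, congrFun hYpi c]
  -- decomposition into rank-one rows
  have hdec : Dᵀ * centering n * Xᵀ * V
      = ∑ i ∈ S, Matrix.of (fun c q => D i c * B i q) := by
    ext c q
    rw [Matrix.sum_apply]
    have hassoc : Dᵀ * centering n * Xᵀ * V = Dᵀ * B := by
      rw [hB, Matrix.mul_assoc, Matrix.mul_assoc, Matrix.mul_assoc]
    rw [hassoc, Matrix.mul_apply]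
    refine (Finset.sum_subset (Finset.subset_univ S) ?_).symm
    intro i _ hiS
    simp [hDzero i hiS c]
  have hsum : mnorm (Dᵀ * centering n * Xᵀ * V)
      ≤ ∑ i ∈ S, mnorm (Matrix.of (fun c q => D i c * B i q)) := by
    rw [hdec, mnorm]
    have h : (fun q : Fin C × Fin p =>
        (∑ i ∈ S, Matrix.of (fun c q' => D i c * B i q')) q.1 q.2)
        = ∑ i ∈ S, (fun q : Fin C × Fin p => D i q.1 * B i q.2) := by
      funext q
      simp [Matrix.sum_apply]
    rw [h]
    exact le_trans (en_sum_le _ _) (le_of_eq rfl)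
  -- each term
  have hterm : ∀ i ∈ S, mnorm (Matrix.of (fun c q => D i c * B i q)) ≤ Real.sqrt 2 * 2 := by
    intro i _
    have hfac : mnorm (Matrix.of (fun c q => D i c * B i q))
        = Real.sqrt (∑ c, D i c ^ 2) * Real.sqrt (∑ q, B i q ^ 2) := by
      rw [mnorm_eq, ← Real.sqrt_mul (by positivity)]
      congr 1
      rw [Finset.sum_mul]
      refine Finset.sum_congr rfl fun c _ => ?_
      rw [Finset.mul_sum]
      exact Finset.sum_congr rfl fun q _ => by simp [mul_pow]
    rw [hfac]
    have h1 : Real.sqrt (∑ c, D i c ^ 2) ≤ Real.sqrt 2 := by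
      obtain ⟨a, ha⟩ := hYn i
      obtain ⟨b, hb⟩ := hYp i
      apply Real.sqrt_le_sqrt
      have : ∀ c, D i c = (Pi.single a 1 : Fin C → ℝ) c - (Pi.single b 1 : Fin C → ℝ) c := by
        intro c
        simp [hD, Matrix.sub_apply, congrFun ha c, congrFun hb c]
      rw [Finset.sum_congr rfl fun c _ => by rw [this c]]
      exact row_diff_bound a b
    have h2 : Real.sqrt (∑ q, B i q ^ 2) ≤ 2 := by
      have hBq : (fun q => B i q) = fun q => ∑ k, (centering n * Xᵀ) i k * V k q := by
        funext q
        rw [hB, Matrix.mul_apply]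
      have := proj_bound V hV (fun k => (centering n * Xᵀ) i k)
      rw [← hBq] at this
      calc Real.sqrt (∑ q, B i q ^ 2) = en (fun q => B i q) := (en_eq _).symm
        _ ≤ en (fun k => (centering n * Xᵀ) i k) := this
        _ ≤ 2 := col_bound hn X hX i
    exact mul_le_mul h1 h2 (Real.sqrt_nonneg _) (Real.sqrt_nonneg _)
  have h5 : ∑ i ∈ S, mnorm (Matrix.of (fun c q => D i c * B i q))
      ≤ 2 * Real.sqrt 2 * (S.card : ℝ) := by
    have h6 := Finset.sum_le_card_nsmul S
      (fun i => mnorm (Matrix.of (fun c q => D i c * B i q))) (Real.sqrt 2 * 2) hterm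
    rw [nsmul_eq_mul] at h6
    have h7 : (S.card : ℝ) * (Real.sqrt 2 * 2) = 2 * Real.sqrt 2 * (S.card : ℝ) := by ring
    linarith
  exact le_trans hsum h5

open Classical in
/-- Theorem 3 of the paper (performance bound for SSRL-PL):
`sqrt(f_X(V*, Y_n)) − sqrt(f_X(V†, Y_n)) ≤ (2(2+√2)·u/(n-1))·P_e^WTA`. -/
theorem stmt2 (n d p C l u : ℕ) (hn : 2 ≤ n) (hu : 1 ≤ u) (hlu : l + u = n)
    (X : Matrix (Fin d) (Fin n) ℝ)
    (hX : ∀ j : Fin n, Real.sqrt (∑ i : Fin d, X i j ^ 2) ≤ 1)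
    (Yn Yp : Matrix (Fin n) (Fin C) ℝ)
    (hYn : ∀ i : Fin n, ∃ c : Fin C, Yn i = Pi.single c 1)
    (hYp : ∀ i : Fin n, ∃ c : Fin C, Yp i = Pi.single c 1)
    (hagree : ∀ i : Fin n, (i : ℕ) < l → Yp i = Yn i)
    (m : ℕ)
    (hm : m = (Finset.univ.filter fun i : Fin n => l ≤ (i : ℕ) ∧ Yp i ≠ Yn i).card)
    (Pe : ℝ) (hPe : Pe = (m : ℝ) / u)
    (Vstar Vdag : Matrix (Fin d) (Fin p) ℝ)
    (hVstar : Vstarᵀ * Vstar = 1) (hVdag : Vdagᵀ * Vdag = 1)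
    (hVstarMax : ∀ V : Matrix (Fin d) (Fin p) ℝ, Vᵀ * V = 1 →
      fObj X V Yn ≤ fObj X Vstar Yn)
    (hVdagMax : ∀ V : Matrix (Fin d) (Fin p) ℝ, Vᵀ * V = 1 →
      fObj X V Yp ≤ fObj X Vdag Yp) :
    Real.sqrt (fObj X Vstar Yn) - Real.sqrt (fObj X Vdag Yn) ≤
      2 * (2 + Real.sqrt 2) * (u : ℝ) / ((n : ℝ) - 1) * Pe := by
  classical
  have hpos : (0 : ℝ) < (n : ℝ) - 1 := by
    have : (2 : ℝ) ≤ (n : ℝ) := by exact_mod_cast hn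
    linarith
  have hu0 : (u : ℝ) ≠ 0 := by positivity
  -- key bounds for both V's
  have hkey1 := key_bound hn X hX Yn Yp hYn hYp hagree Vstar hVstar
  have hkey2 := key_bound hn X hX Yn Yp hYn hYp hagree Vdag hVdag
  rw [← hm] at hkey1 hkey2
  -- decomposition of matrices
  have hsplit : ∀ V : Matrix (Fin d) (Fin p) ℝ,
      Ynᵀ * centering n * Xᵀ * V
        = Ypᵀ * centering n * Xᵀ * V + (Yn - Yp)ᵀ * centering n * Xᵀ * V := by
    intro V
    rw [Matrix.transpose_sub, Matrix.sub_mul, Matrix.sub_mul, Matrix.sub_mul]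
    abel
  -- triangle inequalities
  have htri1 : mnorm (Ynᵀ * centering n * Xᵀ * Vstar)
      ≤ mnorm (Ypᵀ * centering n * Xᵀ * Vstar) + 2 * Real.sqrt 2 * (m : ℝ) := by
    rw [hsplit Vstar]
    exact le_trans (mnorm_add_le _ _) (by linarith)
  have htri2 : mnorm (Ypᵀ * centering n * Xᵀ * Vdag)
      ≤ mnorm (Ynᵀ * centering n * Xᵀ * Vdag) + 2 * Real.sqrt 2 * (m : ℝ) := by
    have h : Ypᵀ * centering n * Xᵀ * Vdag
        = Ynᵀ * centering n * Xᵀ * Vdag + (-((Yn - Yp)ᵀ * centering n * Xᵀ * Vdag)) := by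
      rw [hsplit Vdag]; abel
    rw [h]
    have hneg : mnorm (-((Yn - Yp)ᵀ * centering n * Xᵀ * Vdag))
        = mnorm ((Yn - Yp)ᵀ * centering n * Xᵀ * Vdag) := by
      rw [mnorm, mnorm]
      have : (fun q : Fin C × Fin p => (-((Yn - Yp)ᵀ * centering n * Xᵀ * Vdag)) q.1 q.2)
          = -(fun q : Fin C × Fin p => ((Yn - Yp)ᵀ * centering n * Xᵀ * Vdag) q.1 q.2) := rfl
      rw [this]
      exact norm_neg ((WithLp.equiv 2 (Fin C × Fin p → ℝ)).symm
        (fun q : Fin C × Fin p => ((Yn - Yp)ᵀ * centering n * Xᵀ * Vdag) q.1 q.2))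
    exact le_trans (mnorm_add_le _ _) (by rw [hneg]; linarith)
  -- sqrt versions
  have hs1 := sqrt_fObj hn X Vstar Yn
  have hs2 := sqrt_fObj hn X Vstar Yp
  have hs3 := sqrt_fObj hn X Vdag Yp
  have hs4 := sqrt_fObj hn X Vdag Yn
  have hmono : Real.sqrt (fObj X Vstar Yp) ≤ Real.sqrt (fObj X Vdag Yp) :=
    Real.sqrt_le_sqrt (hVdagMax Vstar hVstar)
  -- chain
  have hchain : Real.sqrt (fObj X Vstar Yn) - Real.sqrt (fObj X Vdag Yn)
      ≤ 2 * (2 * Real.sqrt 2 * (m : ℝ)) / ((n : ℝ) - 1) := by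
    rw [hs1, hs4]
    rw [hs2, hs3] at hmono
    rw [div_le_div_iff₀ hpos hpos] at hmono
    have := mul_le_mul_of_nonneg_left htri1 (le_of_lt hpos)
    rw [div_sub_div_same, div_le_div_iff₀ hpos hpos]
    nlinarith [mnorm_nonneg (Ypᵀ * centering n * Xᵀ * Vstar),
      mnorm_nonneg (Ynᵀ * centering n * Xᵀ * Vdag), Real.sqrt_nonneg 2,
      Nat.cast_nonneg (α := ℝ) m, hpos]
  -- final arithmetic
  have hrhs : 2 * (2 + Real.sqrt 2) * (u : ℝ) / ((n : ℝ) - 1) * Pe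
      = 2 * (2 + Real.sqrt 2) * (m : ℝ) / ((n : ℝ) - 1) := by
    rw [hPe]
    field_simp
  rw [hrhs]
  refine le_trans hchain ?_
  rw [div_le_div_iff₀ hpos hpos]
  have hsqrt2 : Real.sqrt 2 ≤ 2 := by
    nlinarith [Real.sq_sqrt (by norm_num : (0:ℝ) ≤ 2), Real.sqrt_nonneg 2]
  nlinarith [mul_nonneg (sub_nonneg.mpr hsqrt2)
    (mul_nonneg (Nat.cast_nonneg (α := ℝ) m) hpos.le), Real.sqrt_nonneg 2,
    Nat.cast_nonneg (α := ℝ) m, hpos]
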